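/- Let f(x) = x^(2g+1) + h(x)^2 with h ∈ ℤ[x], deg h ≤ g, h(0) odd, and h(1) even. If a ∈ ℤ₂ is a 2-adic unit and f(a) is a square in ℤ₂, then a ≡ 1 - h(1)² (mod 8). -/
import Mathlib

open Polynomial

lemma aux_sq1 : ∀ u : ZMod (2 ^ 3), (∃ w, u * w = 1) → u * u = 1 := by decide

lemma aux_par : ∀ u : ZMod (2 ^ 3), u * u = 1 → ∃ w, u - 1 = w + w := by decide

lemma aux_main : ∀ u v n : ZMod (2 ^ 3), u * u = 1 →
    u + (n + n) * (n + n) = v * v →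
    u = 1 - (n + n) * (n + n) ∧ ∃ d, u - 1 = 4 * d := by decide

lemma aux_last : ∀ e m q : ZMod (2 ^ 3), e = m + m →
    (e + 4 * q) * (e + 4 * q) = e * e := by decide

theorem stmt_12 (g : ℕ) (hg : 1 ≤ g) (h : Polynomial ℤ)
    (hdeg : h.natDegree ≤ g) (h0 : Odd (h.eval 0)) (h1 : Even (h.eval 1))
    (f : Polynomial ℤ) (hf : f = X ^ (2 * g + 1) + h ^ 2)
    (a : ℤ_[2]) (ha : IsUnit a) (hsq : IsSquare (aeval a f)) :
    (8 : ℤ_[2]) ∣ (a - (1 - ((h.eval 1 : ℤ) : ℤ_[2]) ^ 2)) := by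
  obtain ⟨r, hr⟩ := hsq
  set φ : ℤ_[2] →+* ZMod (2 ^ 3) := PadicInt.toZModPow 3 with hφ
  set u := φ a with hu'
  set t := φ (aeval a h) with ht'
  set v := φ r with hv'
  set e : ZMod (2 ^ 3) := ((h.eval 1 : ℤ) : ZMod (2 ^ 3)) with he'
  have hu : IsUnit u := ha.map φ
  have huu : u * u = 1 := aux_sq1 u hu.exists_right_inv
  -- divisibility in ℤ_[2]
  have hdvd : (a - 1) ∣ (aeval a h - ((h.eval 1 : ℤ) : ℤ_[2])) := by
    have H := Polynomial.sub_dvd_eval_sub a 1 (h.map (Int.castRingHom ℤ_[2]))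
    rw [Polynomial.eval_one_map] at H
    simp only [eq_intCast] at H
    rw [aeval_def, Polynomial.eval₂_eq_eval_map, algebraMap_int_eq]
    exact H
  have hdvd8 : (u - 1) ∣ (t - e) := by
    have := map_dvd φ hdvd
    simpa [map_sub, map_intCast] using this
  obtain ⟨c, hc⟩ := hdvd8
  -- e is even
  obtain ⟨k, hk⟩ := h1
  have hem : e = ((k : ℤ) : ZMod (2 ^ 3)) + ((k : ℤ) : ZMod (2 ^ 3)) := by
    rw [he', hk]; push_cast; ring
  -- the equation mod 8
  have heq : a ^ (2 * g + 1) + (aeval a h) * (aeval a h) = r * r := by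
    rw [← hr, hf]; simp only [map_add, map_pow, aeval_X]; ring
  have heqφ : u ^ (2 * g + 1) + t * t = v * v := by
    have := congrArg φ heq
    simpa only [map_add, map_pow, map_mul, ← hu', ← ht', ← hv'] using this
  have hu2 : u ^ 2 = 1 := by rw [sq, huu]
  have hupow : u ^ (2 * g + 1) = u := by
    calc u ^ (2 * g + 1) = (u ^ 2) ^ g * u := by ring
    _ = u := by rw [hu2, one_pow, one_mul]
  rw [hupow] at heqφ
  -- t is even
  obtain ⟨w, hw⟩ := aux_par u huu
  have htn : t = (((k : ℤ) : ZMod (2 ^ 3)) + w * c) + (((k : ℤ) : ZMod (2 ^ 3)) + w * c) := by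
    have : t = e + (u - 1) * c := by rw [← hc]; ring
    rw [this, hem, hw]; ring
  rw [htn] at heqφ
  obtain ⟨hueq, d, hd⟩ := aux_main u v _ huu heqφ
  -- t ≡ e mod 4, so t*t = e*e
  have htq : t = e + 4 * (d * c) := by
    have : t = e + (u - 1) * c := by rw [← hc]; ring
    rw [this, hd]; ring
  have htt : t * t = e * e := by
    rw [htq]; exact aux_last e _ (d * c) hem
  have hfinal : u = 1 - e * e := by
    rw [hueq, ← htn, htt]
  -- conclude
  have h8 : (8 : ℤ_[2]) = ((2 : ℕ) : ℤ_[2]) ^ 3 := by norm_num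
  rw [h8, ← Ideal.mem_span_singleton, ← PadicInt.ker_toZModPow 3, RingHom.mem_ker]
  have hφval : φ (a - (1 - ((h.eval 1 : ℤ) : ℤ_[2]) ^ 2)) = u - (1 - e * e) := by
    rw [map_sub, map_sub, map_one, map_pow, map_intCast, sq, ← he', ← hu']
  rw [← hφ] at *
  rw [hφval, hfinal, sub_self]
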